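/- Let m and c be positive integers. For each integer j with 1 ≤ j ≤ c−1 let w_j ∈ [0,1) be the fractional part of −mj/c, and let κ_{m,c} denote the number of integers j with 1 ≤ j ≤ c−1 such that w_1 + w_j ≥ 1. Then κ_{m,c} ≡ −m (mod c). -/

import Mathlib

lemma fract_add_split (x y : ℚ) :
    Int.fract (x + y) = Int.fract x + Int.fract y -
      (if 1 ≤ Int.fract x + Int.fract y then 1 else 0) := by
  have hxy : x + y = (Int.fract x + Int.fract y) + ((⌊x⌋ + ⌊y⌋ : ℤ) : ℚ) := by
    simp only [Int.fract]
    push_cast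
    ring
  rw [hxy, Int.fract_add_intCast]
  have hx0 := Int.fract_nonneg x
  have hy0 := Int.fract_nonneg y
  have hx1 := Int.fract_lt_one x
  have hy1 := Int.fract_lt_one y
  by_cases h : 1 ≤ Int.fract x + Int.fract y
  · have : Int.fract (Int.fract x + Int.fract y) =
        Int.fract (Int.fract x + Int.fract y - ((1 : ℤ) : ℚ)) := by
      rw [Int.fract_sub_intCast]
    rw [this, Int.fract_eq_self.mpr ⟨by push_cast; linarith, by push_cast; linarith⟩]
    simp [h]
  · rw [Int.fract_eq_self.mpr ⟨by linarith, by linarith⟩]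
    simp [h]


/-- For positive integers `m`, `c`, with `w j` the fractional part of `-mj/c`,
the number `κ_{m,c}` of `j ∈ {1,…,c-1}` with `w 1 + w j ≥ 1` satisfies
`κ_{m,c} ≡ -m (mod c)`. -/
theorem kappa_mod_eq_neg_m (m c : ℕ) (hm : 0 < m) (hc : 0 < c)
    (w : ℕ → ℚ) (hw : ∀ j, w j = Int.fract (-((m : ℚ) * j) / c)) :
    ((((Finset.Icc 1 (c - 1)).filter (fun j => 1 ≤ w 1 + w j)).card : ℤ))
      ≡ -(m : ℤ) [ZMOD (c : ℤ)] := by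
  have hc0 : (c : ℚ) ≠ 0 := Nat.cast_ne_zero.mpr hc.ne'
  -- pointwise recursion
  have hstep : ∀ j : ℕ, w (j + 1) = w 1 + w j - (if 1 ≤ w 1 + w j then 1 else 0) := by
    intro j
    have harg : -((m : ℚ) * (j + 1)) / c = -((m : ℚ) * 1) / c + -((m : ℚ) * j) / c := by
      rw [← add_div]; ring_nf
    rw [hw (j+1), hw 1, hw j] at *
    push_cast
    rw [harg, fract_add_split]
  -- telescoping sum
  have htel : ∑ i ∈ Finset.range (c - 1), (w ((i + 1) + 1) - w (i + 1)) = w c - w 1 := by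
    have := Finset.sum_range_sub (fun i => w (i + 1)) (c - 1)
    simpa [Nat.sub_add_cancel hc] using this
  have hterm : ∀ i : ℕ, w ((i + 1) + 1) - w (i + 1)
      = w 1 - (if 1 ≤ w 1 + w (i + 1) then 1 else 0) := by
    intro i; rw [hstep (i + 1)]; ring
  have hwc : w c = 0 := by
    rw [hw c]
    have : -((m : ℚ) * c) / c = ((-(m : ℤ) : ℤ) : ℚ) := by
      push_cast; field_simp
    rw [this, Int.fract_intCast]
  -- cardinality as a sum over range
  set K : ℕ := ((Finset.Icc 1 (c - 1)).filter (fun j => 1 ≤ w 1 + w j)).card with hK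
  have himg : Finset.Icc 1 (c - 1) = (Finset.range (c - 1)).image (· + 1) := by
    ext j
    simp only [Finset.mem_Icc, Finset.mem_image, Finset.mem_range]
    constructor
    · rintro ⟨h1, h2⟩; exact ⟨j - 1, by omega, by omega⟩
    · rintro ⟨i, hi, rfl⟩; omega
  have hcard : (K : ℚ) = ∑ i ∈ Finset.range (c - 1),
      (if 1 ≤ w 1 + w (i + 1) then (1 : ℚ) else 0) := by
    rw [hK, himg, Finset.filter_image,
      Finset.card_image_of_injective _ (add_left_injective 1)]
    rw [Finset.card_filter]
    push_cast
    rfl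
  -- combine
  have hsum : w c - w 1 = (c - 1 : ℕ) * w 1 - (K : ℚ) := by
    rw [← htel]
    rw [Finset.sum_congr rfl (fun i _ => hterm i), Finset.sum_sub_distrib, hcard]
    simp [mul_comm]
  have hKw : (K : ℚ) = (c : ℚ) * w 1 := by
    have hcast : ((c - 1 : ℕ) : ℚ) = (c : ℚ) - 1 := by
      push_cast [Nat.cast_sub hc]; ring
    rw [hcast] at hsum
    rw [hwc] at hsum
    linarith [hsum]
  -- compute c * w 1
  set q : ℤ := ⌊-((m : ℚ) * ((1:ℕ):ℚ)) / c⌋ with hq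
  have hw1 : (c : ℚ) * w 1 = -(m : ℚ) - (c : ℚ) * (q : ℚ) := by
    rw [hw 1, Int.fract, ← hq]
    field_simp
    norm_num
  have hKint : (K : ℤ) = -(m : ℤ) - (c : ℤ) * q := by
    have : (K : ℚ) = -(m : ℚ) - (c : ℚ) * (q : ℚ) := by rw [hKw, hw1]
    exact_mod_cast this
  exact (Int.modEq_iff_dvd.mpr ⟨-q, by linarith⟩).symm
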